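/- The Prabhakar fractional integral satisfies the semigroup-type composition on kernels: for α > 0, β > 0, μ > 0, real λ, γ, σ, and t > t₀, ∫_{t₀}^t (t-u)^{β-1} E_{α,β}^γ(λ(t-u)^α) · (u-t₀)^{μ-1} E_{α,μ}^σ(λ(u-t₀)^α) du = (t-t₀)^{β+μ-1} E_{α,β+μ}^{γ+σ}(λ(t-t₀)^α). -/

import Mathlib

open scoped BigOperators

/-- Pochhammer symbol `(γ)_k = γ(γ+1)⋯(γ+k-1)`. -/
noncomputable def poch (γ : ℝ) (k : ℕ) : ℝ := ∏ i ∈ Finset.range k, (γ + i)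

/-- The real-argument Prabhakar function `E_{α,β}^γ(x)`. -/
noncomputable def prabhakarR (α β γ : ℝ) (x : ℝ) : ℝ :=
  ∑' k : ℕ, poch γ k * x ^ k / (Nat.factorial k * Real.Gamma (α * k + β))

lemma poch_zero (γ : ℝ) : poch γ 0 = 1 := by simp [poch]

lemma poch_succ (γ : ℝ) (k : ℕ) : poch γ (k+1) = poch γ k * (γ + k) := by
  simp [poch, Finset.prod_range_succ]

lemma poch_nonneg {c : ℝ} (hc : 0 ≤ c) (k : ℕ) : 0 ≤ poch c k :=
  Finset.prod_nonneg fun i _ => by positivity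

lemma abs_poch_le (γ : ℝ) (k : ℕ) : |poch γ k| ≤ poch |γ| k := by
  rw [poch, poch, Finset.abs_prod]
  refine Finset.prod_le_prod (fun i _ => abs_nonneg _) (fun i _ => (abs_add_le _ _).trans ?_)
  simp

lemma poch_mono {c c' : ℝ} (hc : 0 ≤ c) (h : c ≤ c') (k : ℕ) : poch c k ≤ poch c' k :=
  Finset.prod_le_prod (fun i _ => by positivity) (fun i _ => by gcongr)

lemma shift_sum (γ σ : ℝ) (n : ℕ) :
    ∑ p ∈ Finset.HasAntidiagonal.antidiagonal (n+1),
      (p.1 : ℝ) * (poch γ p.1 * poch σ p.2 / (p.1.factorial * p.2.factorial))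
      = ∑ p ∈ Finset.HasAntidiagonal.antidiagonal n,
        (γ + p.1) * (poch γ p.1 * poch σ p.2 / (p.1.factorial * p.2.factorial)) := by
  rw [Finset.Nat.sum_antidiagonal_succ]
  simp only [Nat.cast_zero, zero_mul, zero_add]
  refine Finset.sum_congr rfl fun p hp => ?_
  have hf : ((p.1+1).factorial : ℝ) = (p.1 + 1) * p.1.factorial := by
    rw [Nat.factorial_succ]; push_cast; ring
  rw [poch_succ, hf]
  have h1 : (p.1.factorial : ℝ) ≠ 0 := by positivity
  have h2 : (p.2.factorial : ℝ) ≠ 0 := by positivity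
  have h3 : ((p.1 : ℝ) + 1) ≠ 0 := by positivity
  push_cast
  field_simp

lemma vandermonde_poch (γ σ : ℝ) (n : ℕ) :
    ∑ p ∈ Finset.HasAntidiagonal.antidiagonal n,
      poch γ p.1 * poch σ p.2 / (p.1.factorial * p.2.factorial)
      = poch (γ + σ) n / n.factorial := by
  induction n with
  | zero => simp [poch_zero]
  | succ n ih =>
    have key : ((n : ℝ) + 1) * ∑ p ∈ Finset.HasAntidiagonal.antidiagonal (n+1),
        poch γ p.1 * poch σ p.2 / (p.1.factorial * p.2.factorial)
        = (γ + σ + n) * ∑ p ∈ Finset.HasAntidiagonal.antidiagonal n,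
        poch γ p.1 * poch σ p.2 / (p.1.factorial * p.2.factorial) := by
      rw [Finset.mul_sum]
      have h1 : ∀ p ∈ Finset.HasAntidiagonal.antidiagonal (n+1),
          ((n:ℝ)+1) * (poch γ p.1 * poch σ p.2 / (p.1.factorial * p.2.factorial))
          = (p.1 : ℝ) * (poch γ p.1 * poch σ p.2 / (p.1.factorial * p.2.factorial))
            + (p.2 : ℝ) * (poch γ p.1 * poch σ p.2 / (p.1.factorial * p.2.factorial)) := by
        intro p hp
        rw [Finset.HasAntidiagonal.mem_antidiagonal] at hp
        have hps : ((p.1 : ℝ) + p.2) = (n : ℝ) + 1 := by exact_mod_cast congrArg (Nat.cast : ℕ → ℝ) hp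
        rw [← hps]; ring
      rw [Finset.sum_congr rfl h1, Finset.sum_add_distrib, shift_sum γ σ n]
      have h2 : ∑ p ∈ Finset.HasAntidiagonal.antidiagonal (n+1),
          (p.2 : ℝ) * (poch γ p.1 * poch σ p.2 / (p.1.factorial * p.2.factorial))
          = ∑ p ∈ Finset.HasAntidiagonal.antidiagonal n,
            (σ + p.2) * (poch γ p.1 * poch σ p.2 / (p.1.factorial * p.2.factorial)) := by
        rw [Finset.Nat.sum_antidiagonal_succ']
        simp only [Nat.cast_zero, zero_mul, zero_add]
        refine Finset.sum_congr rfl fun p hp => ?_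
        have hf : ((p.2+1).factorial : ℝ) = (p.2 + 1) * p.2.factorial := by
          rw [Nat.factorial_succ]; push_cast; ring
        rw [poch_succ, hf]
        have h1 : (p.1.factorial : ℝ) ≠ 0 := by positivity
        have h2 : (p.2.factorial : ℝ) ≠ 0 := by positivity
        have h3 : ((p.2 : ℝ) + 1) ≠ 0 := by positivity
        push_cast
        field_simp
      rw [h2, ← Finset.sum_add_distrib, Finset.mul_sum]
      refine Finset.sum_congr rfl fun p hp => ?_
      rw [Finset.HasAntidiagonal.mem_antidiagonal] at hp
      have hps : ((p.1 : ℝ) + p.2) = (n : ℝ) := by exact_mod_cast congrArg (Nat.cast : ℕ → ℝ) hp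
      rw [← hps]; ring
    have hn1 : ((n:ℝ)+1) ≠ 0 := by positivity
    have := key
    rw [ih] at this
    have hfact : ((n+1).factorial : ℝ) = ((n:ℝ)+1) * n.factorial := by
      rw [Nat.factorial_succ]; push_cast; ring
    have hnf : (n.factorial : ℝ) ≠ 0 := by positivity
    rw [poch_succ, hfact]
    push_cast at this
    field_simp at this ⊢
    linarith [this]

lemma Gamma_ratio {α s : ℝ} (hα : 0 < α) (hs : 2 ≤ s) :
    Real.Gamma s * (s - 1) ^ α ≤ Real.Gamma (s + α) := by
  have hs1 : (0:ℝ) < s - 1 := by linarith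
  have hs0 : (0:ℝ) < s := by linarith
  have hsα : (0:ℝ) < s + α := by linarith
  have hconv := Real.convexOn_log_Gamma.2 (Set.mem_Ioi.2 hs1) (Set.mem_Ioi.2 hsα)
    (by positivity : (0:ℝ) ≤ α / (1 + α)) (by positivity : (0:ℝ) ≤ 1 / (1 + α))
    (by field_simp; ring : α / (1 + α) + 1 / (1 + α) = 1)
  have hpt : (α / (1 + α)) • (s - 1) + (1 / (1 + α)) • (s + α) = s := by
    have h1α : (1:ℝ) + α ≠ 0 := by positivity
    rw [smul_eq_mul, smul_eq_mul]
    field_simp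
    ring
  rw [hpt] at hconv
  simp only [Function.comp_apply, smul_eq_mul] at hconv
  -- log Γ s = log (s-1) + log Γ (s-1)
  have hrec : Real.Gamma s = (s - 1) * Real.Gamma (s - 1) := by
    have := Real.Gamma_add_one (show s - 1 ≠ 0 by positivity)
    simpa [sub_add_cancel] using this
  have hΓs1 : 0 < Real.Gamma (s - 1) := Real.Gamma_pos_of_pos hs1
  have hΓs : 0 < Real.Gamma s := Real.Gamma_pos_of_pos hs0
  have hΓsα : 0 < Real.Gamma (s + α) := Real.Gamma_pos_of_pos hsα
  have hlog : Real.log (Real.Gamma s) = Real.log (s - 1) + Real.log (Real.Gamma (s - 1)) := by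
    rw [hrec, Real.log_mul hs1.ne' hΓs1.ne']
  have h1α : (0:ℝ) < 1 + α := by positivity
  have hkey : Real.log (Real.Gamma s) + α * Real.log (s - 1) ≤ Real.log (Real.Gamma (s + α)) := by
    have := mul_le_mul_of_nonneg_left hconv h1α.le
    rw [mul_add] at this
    have e1 : (1 + α) * (α / (1 + α) * Real.log (Real.Gamma (s - 1))) = α * Real.log (Real.Gamma (s - 1)) := by
      field_simp
    have e2 : (1 + α) * (1 / (1 + α) * Real.log (Real.Gamma (s + α))) = Real.log (Real.Gamma (s + α)) := by
      field_simp
    rw [e1, e2] at this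
    nlinarith [hlog]
  calc Real.Gamma s * (s - 1) ^ α
      = Real.exp (Real.log (Real.Gamma s) + α * Real.log (s - 1)) := by
        rw [Real.exp_add, Real.exp_log hΓs, Real.rpow_def_of_pos hs1]
        ring_nf
    _ ≤ Real.exp (Real.log (Real.Gamma (s + α))) := Real.exp_le_exp.2 hkey
    _ = Real.Gamma (s + α) := Real.exp_log hΓsα

lemma summable_master {α β c X : ℝ} (hα : 0 < α) (hβ : 0 < β) (hc : 0 ≤ c) (hX : 0 ≤ X) :
    Summable (fun k : ℕ => poch c k * X ^ k / (k.factorial * Real.Gamma (α * k + β))) := by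
  set R : ℝ := max 1 (2 * (c + 1) * X) with hR
  have hR1 : (1:ℝ) ≤ R := le_max_left _ _
  have hR0 : (0:ℝ) < R := lt_of_lt_of_le one_pos hR1
  set M : ℝ := max 2 (R ^ (α⁻¹) + 1) with hM
  refine summable_of_ratio_norm_eventually_le (r := 1/2) (by norm_num) ?_
  rw [Filter.eventually_atTop]
  refine ⟨⌈(M - β) / α⌉₊, fun k hk => ?_⟩
  simp only [Nat.cast_add, Nat.cast_one]
  have hkM : M ≤ α * k + β := by
    have h1 : (M - β) / α ≤ (k : ℝ) :=
      (Nat.le_ceil _).trans (Nat.cast_le.2 hk)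
    have := (div_le_iff₀ hα).1 h1
    linarith [this]
  set s : ℝ := α * k + β with hs
  have hs2 : 2 ≤ s := le_trans (le_max_left _ _) hkM
  have hsR : R ^ (α⁻¹) ≤ s - 1 := by
    have := le_trans (le_max_right _ _) hkM
    linarith
  have hΓs : 0 < Real.Gamma s := Real.Gamma_pos_of_pos (by linarith)
  have hΓsα : 0 < Real.Gamma (s + α) := Real.Gamma_pos_of_pos (by linarith)
  have hfac : (0:ℝ) < (k.factorial : ℝ) := by positivity
  have hA : 0 ≤ poch c k * X ^ k := mul_nonneg (poch_nonneg hc k) (by positivity)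
  -- key inequality
  have hpow : R ≤ (s - 1) ^ α := by
    calc R = (R ^ (α⁻¹)) ^ α := by
          rw [← Real.rpow_mul hR0.le, inv_mul_cancel₀ hα.ne', Real.rpow_one]
      _ ≤ (s - 1) ^ α := Real.rpow_le_rpow (Real.rpow_nonneg hR0.le _) hsR hα.le
  have hkey : (c + k) * X * Real.Gamma s ≤ 1/2 * ((k + 1) * Real.Gamma (s + α)) := by
    have h1 : (c + k) * X ≤ (k + 1) * (R / 2) := by
      have : (c + (k:ℝ)) ≤ (c + 1) * (k + 1) := by nlinarith [Nat.cast_nonneg (α := ℝ) k]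
      have h2 : (c + (k:ℝ)) * X ≤ (c + 1) * (k + 1) * X :=
        mul_le_mul_of_nonneg_right this hX
      have h3 : 2 * (c + 1) * X ≤ R := le_max_right _ _
      nlinarith [Nat.cast_nonneg (α := ℝ) k]
    have h2 : Real.Gamma s * R ≤ Real.Gamma (s + α) := by
      calc Real.Gamma s * R ≤ Real.Gamma s * (s - 1) ^ α :=
            mul_le_mul_of_nonneg_left hpow hΓs.le
        _ ≤ Real.Gamma (s + α) := Gamma_ratio hα hs2
    calc (c + k) * X * Real.Gamma s ≤ ((k + 1) * (R / 2)) * Real.Gamma s :=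
          mul_le_mul_of_nonneg_right h1 hΓs.le
      _ = 1/2 * ((k + 1) * (Real.Gamma s * R)) := by ring
      _ ≤ 1/2 * ((k + 1) * Real.Gamma (s + α)) := by
          have : (0:ℝ) ≤ (k:ℝ) + 1 := by positivity
          nlinarith [h2]
  -- rewrite the ratio
  have heq : poch c (k+1) * X ^ (k+1) / ((k+1).factorial * Real.Gamma (α * (k+1) + β))
      = (poch c k * X ^ k / (k.factorial * Real.Gamma s)) *
        ((c + k) * X * Real.Gamma s / ((k + 1) * Real.Gamma (s + α))) := by
    have hsa : α * ((k:ℝ)+1) + β = s + α := by rw [hs]; ring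
    rw [poch_succ, pow_succ]
    push_cast
    rw [hsa, Nat.factorial_succ]
    push_cast
    field_simp
  have hq : (c + k) * X * Real.Gamma s / ((k + 1) * Real.Gamma (s + α)) ≤ 1/2 := by
    rw [div_le_iff₀ (by positivity)]
    calc (c + k) * X * Real.Gamma s ≤ 1/2 * ((k + 1) * Real.Gamma (s + α)) := hkey
      _ = 1 / 2 * ((↑k + 1) * Real.Gamma (s + α)) := by norm_num
  have hak : 0 ≤ poch c k * X ^ k / (k.factorial * Real.Gamma s) := by positivity
  have hak1 : 0 ≤ poch c (k+1) * X ^ (k+1) / ((k+1).factorial * Real.Gamma (α * (k+1) + β)) := by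
    have : 0 < Real.Gamma (α * ((k:ℝ)+1) + β) := Real.Gamma_pos_of_pos (by positivity)
    have h0 : 0 ≤ poch c (k+1) := poch_nonneg hc _
    push_cast
    positivity
  rw [Real.norm_eq_abs, Real.norm_eq_abs, abs_of_nonneg hak1]
  have : |poch c k * X ^ k / (↑k.factorial * Real.Gamma (α * ↑k + β))| = poch c k * X ^ k / (k.factorial * Real.Gamma s) := abs_of_nonneg hak
  rw [this, heq]
  calc (poch c k * X ^ k / (k.factorial * Real.Gamma s)) *
        ((c + k) * X * Real.Gamma s / ((k + 1) * Real.Gamma (s + α)))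
      ≤ (poch c k * X ^ k / (k.factorial * Real.Gamma s)) * (1/2) :=
        mul_le_mul_of_nonneg_left hq hak
    _ = 1/2 * (poch c k * X ^ k / (k.factorial * Real.Gamma s)) := by ring

open MeasureTheory in
lemma integrableOn_beta01 {a b : ℝ} (ha : 0 < a) (hb : 0 < b) :
    IntegrableOn (fun x : ℝ => x ^ (a-1) * (1-x) ^ (b-1)) (Set.Ioo (0:ℝ) 1) volume := by
  have hC := Complex.betaIntegral_convergent (u := (a:ℂ)) (v := (b:ℂ))
    (by simpa using ha) (by simpa using hb)
  have hN := hC.norm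
  have hI : IntegrableOn (fun x : ℝ => ‖(x:ℂ) ^ ((a:ℂ)-1) * (1-(x:ℂ)) ^ ((b:ℂ)-1)‖)
      (Set.Ioo (0:ℝ) 1) volume :=
    (intervalIntegrable_iff_integrableOn_Ioo_of_le (by norm_num)).1 hN
  refine hI.congr_fun (fun x hx => ?_) measurableSet_Ioo
  obtain ⟨h0, h1⟩ := hx
  beta_reduce
  rw [norm_mul]
  have e1 : (1 : ℂ) - (x:ℂ) = ((1 - x : ℝ) : ℂ) := by push_cast; ring
  rw [Complex.norm_cpow_eq_rpow_re_of_pos h0, e1,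
    Complex.norm_cpow_eq_rpow_re_of_pos (by linarith)]
  simp [Complex.sub_re]

lemma integral_beta01 {a b : ℝ} (ha : 0 < a) (hb : 0 < b) :
    ∫ x in (0:ℝ)..1, x ^ (a-1) * (1-x) ^ (b-1)
      = Real.Gamma a * Real.Gamma b / Real.Gamma (a+b) := by
  have hc := Complex.Gamma_mul_Gamma_eq_betaIntegral (s := (a:ℂ)) (t := (b:ℂ))
    (by simpa using ha) (by simpa using hb)
  have hB : Complex.betaIntegral (a:ℂ) (b:ℂ)
      = ((∫ x in (0:ℝ)..1, x ^ (a-1) * (1-x) ^ (b-1) : ℝ) : ℂ) := by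
    rw [Complex.betaIntegral, ← intervalIntegral.integral_ofReal]
    refine intervalIntegral.integral_congr fun x hx => ?_
    rw [Set.uIcc_of_le (by norm_num : (0:ℝ) ≤ 1)] at hx
    obtain ⟨h0, h1⟩ := hx
    have e1 : ((x ^ (a-1) : ℝ) : ℂ) = (x:ℂ) ^ ((a:ℂ)-1) := by
      rw [Complex.ofReal_cpow h0]; push_cast; ring_nf
    have e2 : (((1-x) ^ (b-1) : ℝ) : ℂ) = (1-(x:ℂ)) ^ ((b:ℂ)-1) := by
      rw [Complex.ofReal_cpow (by linarith)]; push_cast; ring_nf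
    rw [Complex.ofReal_mul, e1, e2]
  rw [hB] at hc
  have hga : Complex.Gamma ((a:ℂ)) = ((Real.Gamma a : ℝ) : ℂ) := Complex.Gamma_ofReal a
  have hgb : Complex.Gamma ((b:ℂ)) = ((Real.Gamma b : ℝ) : ℂ) := Complex.Gamma_ofReal b
  have hgab : Complex.Gamma ((a:ℂ) + (b:ℂ)) = ((Real.Gamma (a+b) : ℝ) : ℂ) := by
    rw [← Complex.ofReal_add]; exact Complex.Gamma_ofReal (a+b)
  rw [hga, hgb, hgab, ← Complex.ofReal_mul, ← Complex.ofReal_mul] at hc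
  have hr : Real.Gamma a * Real.Gamma b
      = Real.Gamma (a+b) * ∫ x in (0:ℝ)..1, x ^ (a-1) * (1-x) ^ (b-1) := by
    exact_mod_cast hc
  have hpos : 0 < Real.Gamma (a+b) := Real.Gamma_pos_of_pos (by linarith)
  field_simp [hpos.ne'] at hr ⊢
  linarith [hr]

lemma beta_shift_ptwise {a b t₀ t u : ℝ} (hu : u ∈ Set.Ioo t₀ t) :
    (t-u) ^ (a-1) * (u-t₀) ^ (b-1)
      = (t-t₀) ^ (a+b-2) *
        (((u-t₀) * (t-t₀)⁻¹) ^ (b-1) * (1 - (u-t₀) * (t-t₀)⁻¹) ^ (a-1)) := by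
  obtain ⟨h1, h2⟩ := hu
  have hT : (0:ℝ) < t - t₀ := by linarith
  have hu0 : (0:ℝ) < u - t₀ := by linarith
  have htu : (0:ℝ) < t - u := by linarith
  have e1 : (1 : ℝ) - (u-t₀) * (t-t₀)⁻¹ = (t-u) * (t-t₀)⁻¹ := by
    field_simp
    ring
  rw [e1, Real.mul_rpow hu0.le (by positivity), Real.mul_rpow htu.le (by positivity),
    Real.inv_rpow hT.le, Real.inv_rpow hT.le]
  have h2' : Real.rpow (t-t₀) (b-1) ≠ 0 := by
    have := Real.rpow_pos_of_pos hT (b-1); positivity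
  have h3' : Real.rpow (t-t₀) (a-1) ≠ 0 := by
    have := Real.rpow_pos_of_pos hT (a-1); positivity
  have key : (t-t₀) ^ (a+b-2) = (t-t₀) ^ (a-1) * (t-t₀) ^ (b-1) := by
    rw [← Real.rpow_add hT]; ring_nf
  rw [key]
  field_simp

open MeasureTheory in
lemma integrableOn_beta_shifted {a b t₀ t : ℝ} (ha : 0 < a) (hb : 0 < b) (ht : t₀ < t) :
    IntegrableOn (fun u => (t-u) ^ (a-1) * (u-t₀) ^ (b-1)) (Set.Ioo t₀ t) volume := by
  have hT : (0:ℝ) < t - t₀ := by linarith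
  have k1 : IntervalIntegrable (fun x : ℝ => x ^ (b-1) * (1-x) ^ (a-1)) volume 0 1 :=
    (intervalIntegrable_iff_integrableOn_Ioo_of_le (by norm_num : (0:ℝ) ≤ 1)).2
      (integrableOn_beta01 hb ha)
  have k2 := k1.comp_mul_right (c := (t-t₀)⁻¹)
  rw [show (0:ℝ)/(t-t₀)⁻¹ = 0 by simp, show (1:ℝ)/(t-t₀)⁻¹ = t - t₀ by field_simp] at k2
  have k3 := k2.comp_sub_right t₀
  rw [zero_add, show t - t₀ + t₀ = t by ring] at k3
  have k5 : IntegrableOn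
      (fun u : ℝ => ((u - t₀) * (t-t₀)⁻¹) ^ (b-1) * (1 - (u - t₀) * (t-t₀)⁻¹) ^ (a-1))
      (Set.Ioo t₀ t) volume :=
    (intervalIntegrable_iff_integrableOn_Ioo_of_le ht.le).1 k3
  have k6 : IntegrableOn
      (fun u : ℝ => (t-t₀) ^ (a+b-2) *
        (((u - t₀) * (t-t₀)⁻¹) ^ (b-1) * (1 - (u - t₀) * (t-t₀)⁻¹) ^ (a-1)))
      (Set.Ioo t₀ t) volume := k5.const_mul _
  exact k6.congr_fun (fun u hu => (beta_shift_ptwise hu).symm) measurableSet_Ioo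

open MeasureTheory in
lemma setIntegral_beta_shifted {a b t₀ t : ℝ} (ha : 0 < a) (hb : 0 < b) (ht : t₀ < t) :
    ∫ u in Set.Ioo t₀ t, (t-u) ^ (a-1) * (u-t₀) ^ (b-1)
      = Real.Gamma a * Real.Gamma b / Real.Gamma (a+b) * (t-t₀) ^ (a+b-1) := by
  have hT : (0:ℝ) < t - t₀ := by linarith
  rw [setIntegral_congr_fun measurableSet_Ioo
    (fun u hu => beta_shift_ptwise (a := a) (b := b) hu), MeasureTheory.integral_const_mul]
  have step1 : ∫ u in Set.Ioo t₀ t,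
      (((u-t₀) * (t-t₀)⁻¹) ^ (b-1) * (1 - (u-t₀) * (t-t₀)⁻¹) ^ (a-1))
      = ∫ u in t₀..t, (((u-t₀) * (t-t₀)⁻¹) ^ (b-1) * (1 - (u-t₀) * (t-t₀)⁻¹) ^ (a-1)) := by
    rw [intervalIntegral.integral_of_le ht.le, integral_Ioc_eq_integral_Ioo]
  have step2 := intervalIntegral.integral_comp_mul_add (a := t₀) (b := t)
    (f := fun x : ℝ => x ^ (b-1) * (1-x) ^ (a-1)) (c := (t-t₀)⁻¹)
    (by positivity : ((t-t₀)⁻¹ : ℝ) ≠ 0) (-(t₀ * (t-t₀)⁻¹))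
  have e0 : (t-t₀)⁻¹ * t₀ + -(t₀ * (t-t₀)⁻¹) = 0 := by ring
  have e1 : (t-t₀)⁻¹ * t + -(t₀ * (t-t₀)⁻¹) = 1 := by
    field_simp
    ring
  rw [e0, e1] at step2
  have efun : ∀ u : ℝ, ((t-t₀)⁻¹ * u + -(t₀ * (t-t₀)⁻¹)) = (u - t₀) * (t-t₀)⁻¹ := fun u => by ring
  simp only [efun] at step2
  rw [step1, step2, integral_beta01 hb ha, add_comm b a]
  rw [smul_eq_mul, inv_inv]
  have : (t-t₀) ^ (a+b-2) * ((t-t₀) * (Real.Gamma b * Real.Gamma a / Real.Gamma (a+b)))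
      = Real.Gamma a * Real.Gamma b / Real.Gamma (a+b) * ((t-t₀) ^ (a+b-2) * (t-t₀)) := by ring
  rw [this]
  congr 1
  rw [show a+b-1 = (a+b-2)+1 by ring, Real.rpow_add hT, Real.rpow_one]

lemma tsum_antidiag {f : ℕ × ℕ → ℝ} (hf : Summable f) :
    ∑' p : ℕ × ℕ, f p = ∑' n : ℕ, ∑ p ∈ Finset.HasAntidiagonal.antidiagonal n, f p := by
  have hs : Summable (fun c : Σ n : ℕ, {x // x ∈ Finset.HasAntidiagonal.antidiagonal n} =>
      f (Finset.HasAntidiagonal.sigmaAntidiagonalEquivProd c)) :=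
    Finset.HasAntidiagonal.sigmaAntidiagonalEquivProd.summable_iff.2 hf
  rw [← Finset.HasAntidiagonal.sigmaAntidiagonalEquivProd.tsum_eq f, Summable.tsum_sigma hs]
  exact tsum_congr fun n => by
    rw [← Finset.tsum_subtype]
    rfl

lemma summable_antidiag {f : ℕ × ℕ → ℝ} (hnn : ∀ p, 0 ≤ f p)
    (h : Summable fun n => ∑ p ∈ Finset.HasAntidiagonal.antidiagonal n, f p) : Summable f := by
  rw [← Finset.HasAntidiagonal.sigmaAntidiagonalEquivProd.summable_iff]
  refine (summable_sigma_of_nonneg (fun x => hnn _)).2 ⟨fun n => (hasSum_fintype _).summable, ?_⟩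
  convert h using 2 with n
  rw [← Finset.tsum_subtype]
  rfl

lemma kernel_tsum {α δ g lam w : ℝ} (hw : 0 < w) :
    w ^ (δ-1) * prabhakarR α δ g (lam * w ^ α)
      = ∑' k : ℕ, (poch g k * lam ^ k / (k.factorial * Real.Gamma (α*k+δ))) * w ^ (α*k+δ-1) := by
  rw [prabhakarR, ← tsum_mul_left]
  refine tsum_congr fun k => ?_
  have e1 : (lam * w ^ α) ^ k = lam ^ k * w ^ (α * k) := by
    rw [mul_pow, ← Real.rpow_natCast (w ^ α) k, ← Real.rpow_mul hw.le]
  have e2 : w ^ (α*k+δ-1) = w ^ (α*(k:ℝ)) * w ^ (δ-1) := by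
    rw [← Real.rpow_add hw]; ring_nf
  rw [e1, e2]
  ring

lemma summable_kernel_norm {α δ g lam w : ℝ} (hα : 0 < α) (hδ : 0 < δ) (hw : 0 < w) :
    Summable fun k : ℕ =>
      ‖(poch g k * lam ^ k / (k.factorial * Real.Gamma (α*k+δ))) * w ^ (α*k+δ-1)‖ := by
  have hX : 0 ≤ |lam| * w ^ α := by positivity
  refine Summable.of_nonneg_of_le (fun k => norm_nonneg _) (fun k => ?_)
    ((summable_master hα hδ (abs_nonneg g) hX).mul_right (w ^ (δ-1)))
  have hΓ : 0 < Real.Gamma (α*k+δ) := Real.Gamma_pos_of_pos (by positivity)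
  have hfk : (0:ℝ) < k.factorial := by positivity
  rw [Real.norm_eq_abs, abs_mul, abs_div, abs_mul, abs_of_nonneg (by positivity : (0:ℝ) ≤ (k.factorial:ℝ) * Real.Gamma (α*k+δ)), abs_of_nonneg (Real.rpow_nonneg hw.le _), abs_pow]
  have e2 : w ^ (α*k+δ-1) = (w ^ α) ^ k * w ^ (δ-1) := by
    rw [← Real.rpow_natCast (w ^ α) k, ← Real.rpow_mul hw.le, ← Real.rpow_add hw]
    ring_nf
  rw [e2]
  have hb : |poch g k| * |lam| ^ k ≤ poch |g| k * |lam| ^ k :=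
    mul_le_mul_of_nonneg_right (abs_poch_le g k) (by positivity)
  have : poch |g| k * (|lam| * w ^ α) ^ k = poch |g| k * |lam| ^ k * (w ^ α) ^ k := by
    rw [mul_pow]; ring
  calc |poch g k| * |lam| ^ k / ((k.factorial:ℝ) * Real.Gamma (α*k+δ)) * ((w ^ α) ^ k * w ^ (δ-1))
      ≤ poch |g| k * |lam| ^ k / ((k.factorial:ℝ) * Real.Gamma (α*k+δ)) * ((w ^ α) ^ k * w ^ (δ-1)) := by
        have h1 : (0:ℝ) ≤ (w ^ α) ^ k * w ^ (δ-1) := by positivity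
        have h2 : (0:ℝ) < (k.factorial:ℝ) * Real.Gamma (α*k+δ) := by positivity
        gcongr
    _ = poch |g| k * (|lam| * w ^ α) ^ k / ((k.factorial:ℝ) * Real.Gamma (α*k+δ)) * w ^ (δ-1) := by
        rw [this]; ring

open MeasureTheory in
/-- The convolution of two Prabhakar kernels is a Prabhakar kernel with added parameters:
`∫_{t₀}^t (t-u)^{β-1} E_{α,β}^γ(λ(t-u)^α) (u-t₀)^{μ-1} E_{α,μ}^σ(λ(u-t₀)^α) du
  = (t-t₀)^{β+μ-1} E_{α,β+μ}^{γ+σ}(λ(t-t₀)^α)`. -/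
theorem prabhakar_kernel_convolution (α β μ lam γ σ t₀ t : ℝ)
    (hα : 0 < α) (hβ : 0 < β) (hμ : 0 < μ) (ht : t₀ < t) :
    ∫ u in t₀..t,
        (t - u) ^ (β - 1) * prabhakarR α β γ (lam * (t - u) ^ α) *
          ((u - t₀) ^ (μ - 1) * prabhakarR α μ σ (lam * (u - t₀) ^ α)) =
      (t - t₀) ^ (β + μ - 1) * prabhakarR α (β + μ) (γ + σ) (lam * (t - t₀) ^ α) := by
  have hT : (0:ℝ) < t - t₀ := by linarith
  set K : ℕ × ℕ → ℝ := fun p =>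
    poch γ p.1 * lam ^ p.1 / (p.1.factorial * Real.Gamma (α*p.1+β)) *
      (poch σ p.2 * lam ^ p.2 / (p.2.factorial * Real.Gamma (α*p.2+μ))) with hK
  set F : ℕ × ℕ → ℝ → ℝ := fun p u =>
    K p * ((t-u) ^ (α*p.1+β-1) * (u-t₀) ^ (α*p.2+μ-1)) with hF
  set G : ℕ × ℕ → ℝ := fun p =>
    poch γ p.1 * poch σ p.2 / (p.1.factorial * p.2.factorial) *
      (lam * (t-t₀) ^ α) ^ (p.1 + p.2) /
      Real.Gamma (α * ((p.1 + p.2 : ℕ) : ℝ) + (β+μ)) * (t-t₀) ^ (β+μ-1) with hG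
  -- basic positivity
  have hΓ1 : ∀ k : ℕ, 0 < Real.Gamma (α*k+β) := fun k => Real.Gamma_pos_of_pos (by positivity)
  have hΓ2 : ∀ j : ℕ, 0 < Real.Gamma (α*j+μ) := fun j => Real.Gamma_pos_of_pos (by positivity)
  have hΓ3 : ∀ p : ℕ × ℕ, 0 < Real.Gamma (α*p.1+β+(α*p.2+μ)) := fun p =>
    Real.Gamma_pos_of_pos (by positivity)
  -- the coefficient * beta-value identity
  have hKG : ∀ p : ℕ × ℕ,
      K p * (Real.Gamma (α*p.1+β) * Real.Gamma (α*p.2+μ) / Real.Gamma (α*p.1+β+(α*p.2+μ)) *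
        (t-t₀) ^ (α*p.1+β+(α*p.2+μ)-1)) = G p := by
    rintro ⟨k, j⟩
    have h1 := hΓ1 k
    have h2 := hΓ2 j
    have h3 := hΓ3 (k, j)
    have hfk : (0:ℝ) < (k.factorial : ℝ) := by positivity
    have hfj : (0:ℝ) < (j.factorial : ℝ) := by positivity
    have hab : Real.Gamma (α*(k:ℝ)+β+(α*(j:ℝ)+μ))
        = Real.Gamma (α * (((k+j : ℕ)) : ℝ) + (β+μ)) := by
      congr 1; push_cast; ring
    have hTsplit : (t-t₀) ^ (α*(k:ℝ)+β+(α*(j:ℝ)+μ)-1)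
        = ((t-t₀) ^ α) ^ (k+j : ℕ) * (t-t₀) ^ (β+μ-1) := by
      rw [← Real.rpow_natCast ((t-t₀) ^ α) (k+j), ← Real.rpow_mul hT.le, ← Real.rpow_add hT]
      congr 1; push_cast; ring
    have hY : (lam * (t-t₀) ^ α) ^ (k+j : ℕ)
        = lam ^ k * lam ^ j * ((t-t₀) ^ α) ^ (k+j : ℕ) := by
      ring
    simp only [hK, hG]
    rw [hTsplit, hab] at *
    rw [hY]
    field_simp
  -- pointwise expansion of the integrand
  have hpt : Set.EqOn
      (fun u => (t - u) ^ (β - 1) * prabhakarR α β γ (lam * (t - u) ^ α) *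
          ((u - t₀) ^ (μ - 1) * prabhakarR α μ σ (lam * (u - t₀) ^ α)))
      (fun u => ∑' p : ℕ × ℕ, F p u) (Set.Ioo t₀ t) := by
    intro u hu
    obtain ⟨hu1, hu2⟩ := hu
    have hw : (0:ℝ) < t - u := by linarith
    have hv : (0:ℝ) < u - t₀ := by linarith
    simp only
    rw [kernel_tsum hw, kernel_tsum hv,
      tsum_mul_tsum_of_summable_norm (summable_kernel_norm hα hβ hw)
        (summable_kernel_norm hα hμ hv)]
    exact tsum_congr fun p => by simp only [hF, hK]; ring
  -- integrability of each summand
  have hint : ∀ p : ℕ × ℕ, IntegrableOn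
      (fun u => (t-u) ^ (α*p.1+β-1) * (u-t₀) ^ (α*p.2+μ-1)) (Set.Ioo t₀ t) volume :=
    fun p => integrableOn_beta_shifted (by positivity) (by positivity) ht
  -- value of each integral
  have hval : ∀ p : ℕ × ℕ, ∫ u in Set.Ioo t₀ t, F p u = G p := by
    intro p
    simp only [hF]
    rw [MeasureTheory.integral_const_mul,
      setIntegral_beta_shifted (by positivity) (by positivity) ht, hKG p]
  -- summability of |G| and G
  set X : ℝ := |lam| * (t-t₀) ^ α with hX
  have hXnn : 0 ≤ X := by positivity
  set W : ℕ × ℕ → ℝ := fun p =>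
    poch |γ| p.1 * poch |σ| p.2 / (p.1.factorial * p.2.factorial) *
      (X ^ (p.1 + p.2) / Real.Gamma (α * ((p.1 + p.2 : ℕ) : ℝ) + (β+μ)) *
        (t-t₀) ^ (β+μ-1)) with hW
  have hWnn : ∀ p, 0 ≤ W p := by
    intro p
    have h3 : 0 < Real.Gamma (α * ((p.1 + p.2 : ℕ) : ℝ) + (β+μ)) :=
      Real.Gamma_pos_of_pos (by positivity)
    have := poch_nonneg (abs_nonneg γ) p.1
    have := poch_nonneg (abs_nonneg σ) p.2
    simp only [hW]
    positivity
  have hWsum : Summable W := by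
    refine summable_antidiag hWnn ?_
    have hmaster := (summable_master hα (by linarith : (0:ℝ) < β + μ)
      (by positivity : (0:ℝ) ≤ |γ| + |σ|) hXnn).mul_right ((t-t₀) ^ (β+μ-1))
    refine hmaster.congr fun n => ?_
    have hsum : ∑ p ∈ Finset.HasAntidiagonal.antidiagonal n, W p
        = (∑ p ∈ Finset.HasAntidiagonal.antidiagonal n,
            poch |γ| p.1 * poch |σ| p.2 / (p.1.factorial * p.2.factorial)) *
          (X ^ n / Real.Gamma (α * (n : ℝ) + (β+μ)) * (t-t₀) ^ (β+μ-1)) := by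
      rw [Finset.sum_mul]
      refine Finset.sum_congr rfl fun p hp => ?_
      rw [Finset.HasAntidiagonal.mem_antidiagonal] at hp
      simp only [hW, hp]
    rw [hsum, vandermonde_poch]
    field_simp
  have habsG : ∀ p : ℕ × ℕ, |G p| ≤ W p := by
    intro p
    have h3 : 0 < Real.Gamma (α * ((p.1 + p.2 : ℕ) : ℝ) + (β+μ)) :=
      Real.Gamma_pos_of_pos (by positivity)
    have hfk : (0:ℝ) < (p.1.factorial : ℝ) := by positivity
    have hfj : (0:ℝ) < (p.2.factorial : ℝ) := by positivity
    have hYX : |lam * (t-t₀) ^ α| = X := by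
      rw [abs_mul, abs_of_nonneg (Real.rpow_nonneg hT.le α)]
    simp only [hG, hW]
    rw [abs_mul, abs_div, abs_mul, abs_div, abs_mul, abs_pow, hYX,
      abs_of_nonneg (Real.rpow_nonneg hT.le (β+μ-1)),
      abs_of_nonneg (mul_nonneg hfk.le hfj.le), abs_of_nonneg h3.le]
    have hb : |poch γ p.1| * |poch σ p.2| ≤ poch |γ| p.1 * poch |σ| p.2 :=
      mul_le_mul (abs_poch_le γ p.1) (abs_poch_le σ p.2) (abs_nonneg _)
        (poch_nonneg (abs_nonneg γ) p.1)
    calc |poch γ p.1| * |poch σ p.2| / ((p.1.factorial : ℝ) * p.2.factorial) *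
          X ^ (p.1 + p.2) / Real.Gamma (α * ((p.1 + p.2 : ℕ) : ℝ) + (β+μ)) *
          (t-t₀) ^ (β+μ-1)
        ≤ poch |γ| p.1 * poch |σ| p.2 / ((p.1.factorial : ℝ) * p.2.factorial) *
          X ^ (p.1 + p.2) / Real.Gamma (α * ((p.1 + p.2 : ℕ) : ℝ) + (β+μ)) *
          (t-t₀) ^ (β+μ-1) := by
          gcongr
      _ = poch |γ| p.1 * poch |σ| p.2 / ((p.1.factorial : ℝ) * p.2.factorial) *
          (X ^ (p.1 + p.2) / Real.Gamma (α * ((p.1 + p.2 : ℕ) : ℝ) + (β+μ)) *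
            (t-t₀) ^ (β+μ-1)) := by ring
  have hGabs : Summable fun p : ℕ × ℕ => |G p| :=
    Summable.of_nonneg_of_le (fun p => abs_nonneg _) habsG hWsum
  have hGsum : Summable G := hGabs.of_abs
  -- measurability
  have hmeas : ∀ p : ℕ × ℕ, AEStronglyMeasurable (F p) (volume.restrict (Set.Ioo t₀ t)) := by
    intro p
    apply Measurable.aestronglyMeasurable
    simp only [hF]
    fun_prop
  -- the lintegral bound
  have hlp : ∀ p : ℕ × ℕ, ∫⁻ u in Set.Ioo t₀ t, ‖F p u‖₊ ∂volume = ENNReal.ofReal |G p| := by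
    intro p
    have hBnn : 0 ≤ Real.Gamma (α*p.1+β) * Real.Gamma (α*p.2+μ) /
        Real.Gamma (α*p.1+β+(α*p.2+μ)) * (t-t₀) ^ (α*p.1+β+(α*p.2+μ)-1) := by
      have h1 := hΓ1 p.1
      have h2 := hΓ2 p.2
      have h3 := hΓ3 p
      positivity
    have hi : Integrable (fun u => |K p| * ((t-u) ^ (α*p.1+β-1) * (u-t₀) ^ (α*p.2+μ-1)))
        (volume.restrict (Set.Ioo t₀ t)) := (hint p).const_mul _
    calc ∫⁻ u in Set.Ioo t₀ t, ‖F p u‖₊ ∂volume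
        = ∫⁻ u in Set.Ioo t₀ t,
            ENNReal.ofReal (|K p| * ((t-u) ^ (α*p.1+β-1) * (u-t₀) ^ (α*p.2+μ-1))) ∂volume := by
          refine setLIntegral_congr_fun measurableSet_Ioo ?_
          intro u hu
          have h1 : (0:ℝ) ≤ t - u := by linarith [hu.2]
          have h2 : (0:ℝ) ≤ u - t₀ := by linarith [hu.1]
          have habs : |F p u| = |K p| * ((t-u) ^ (α*p.1+β-1) * (u-t₀) ^ (α*p.2+μ-1)) := by
            simp only [hF]
            rw [abs_mul]
            congr 1
            exact abs_of_nonneg (by positivity)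
          beta_reduce
          rw [← enorm_eq_nnnorm, Real.enorm_eq_ofReal_abs, habs]
      _ = ENNReal.ofReal (∫ u in Set.Ioo t₀ t,
            |K p| * ((t-u) ^ (α*p.1+β-1) * (u-t₀) ^ (α*p.2+μ-1)) ∂volume) := by
          refine (ofReal_integral_eq_lintegral_ofReal hi ?_).symm
          refine (ae_restrict_iff' measurableSet_Ioo).2 (Filter.Eventually.of_forall ?_)
          intro u hu
          have h1 : (0:ℝ) ≤ t - u := by linarith [hu.2]
          have h2 : (0:ℝ) ≤ u - t₀ := by linarith [hu.1]
          positivity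
      _ = ENNReal.ofReal |G p| := by
          rw [MeasureTheory.integral_const_mul,
            setIntegral_beta_shifted (by positivity) (by positivity) ht]
          congr 1
          rw [← hKG p, abs_mul (K p) (Real.Gamma (α*p.1+β) * Real.Gamma (α*p.2+μ) /
            Real.Gamma (α*p.1+β+(α*p.2+μ)) * (t-t₀) ^ (α*p.1+β+(α*p.2+μ)-1)),
            abs_of_nonneg hBnn]
  -- main computation
  rw [intervalIntegral.integral_of_le ht.le, integral_Ioc_eq_integral_Ioo,
    setIntegral_congr_fun measurableSet_Ioo hpt, integral_tsum hmeas (by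
      simp only [enorm_eq_nnnorm]
      rw [funext hlp, ← ENNReal.ofReal_tsum_of_nonneg (fun p => abs_nonneg _) hGabs]
      exact ENNReal.ofReal_ne_top)]
  calc ∑' p : ℕ × ℕ, ∫ u in Set.Ioo t₀ t, F p u
      = ∑' p : ℕ × ℕ, G p := tsum_congr hval
    _ = ∑' n : ℕ, ∑ p ∈ Finset.HasAntidiagonal.antidiagonal n, G p := tsum_antidiag hGsum
    _ = ∑' n : ℕ, (t-t₀) ^ (β+μ-1) *
          (poch (γ+σ) n * (lam * (t-t₀) ^ α) ^ n /
            (n.factorial * Real.Gamma (α * (n:ℝ) + (β+μ)))) := by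
        refine tsum_congr fun n => ?_
        have hΓn : 0 < Real.Gamma (α * (n:ℝ) + (β+μ)) :=
          Real.Gamma_pos_of_pos (by positivity)
        have hfn : (0:ℝ) < (n.factorial : ℝ) := by positivity
        have hsum : ∑ p ∈ Finset.HasAntidiagonal.antidiagonal n, G p
            = (∑ p ∈ Finset.HasAntidiagonal.antidiagonal n,
                poch γ p.1 * poch σ p.2 / (p.1.factorial * p.2.factorial)) *
              ((lam * (t-t₀) ^ α) ^ n / Real.Gamma (α * (n:ℝ) + (β+μ)) *
                (t-t₀) ^ (β+μ-1)) := by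
          rw [Finset.sum_mul]
          refine Finset.sum_congr rfl fun p hp => ?_
          rw [Finset.HasAntidiagonal.mem_antidiagonal] at hp
          simp only [hG, hp]
          ring
        rw [hsum, vandermonde_poch]
        field_simp
    _ = (t - t₀) ^ (β + μ - 1) * prabhakarR α (β + μ) (γ + σ) (lam * (t - t₀) ^ α) := by
        rw [prabhakarR, tsum_mul_left]
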